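/- Let γ₁ ∈ F^{n×n} with tr(γ₁) = 1 and γ₀ ∈ F^{m×m}⊗F^{n×n}⊗F^{m×m} with tr₂(γ₀) = 0 (partial trace over the middle factor). Set α := Σ_{i,j=1}^m E_{ij}⊗γ₁⊗E_{ji} + γ₀. Then the map δ(A,B) := tr₁₂(αᵀ(A⊗I_m − I_m⊗B⊗I_m)) satisfies δ(A⊕B, B) = A for all A ∈ F^{m×m} and B ∈ F^{n×n}. -/

import Mathlib

open Matrix Kronecker

/-- The Kronecker sum `A ⊕ B = A ⊗ I + I ⊗ B`. -/
def ksum {F : Type*} [Semiring F] {α β : Type*} [Fintype α] [Fintype β]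
    [DecidableEq α] [DecidableEq β]
    (A : Matrix α α F) (B : Matrix β β F) : Matrix (α × β) (α × β) F :=
  A ⊗ₖ (1 : Matrix β β F) + (1 : Matrix α α F) ⊗ₖ B

/-- Partial trace over the first two tensor factors:
`tr12 (A ⊗ B ⊗ C) = tr A * tr B • C`. -/
def tr12 {F : Type*} [AddCommMonoid F] {α β γ : Type*} [Fintype α] [Fintype β]
    (M : Matrix ((α × β) × γ) ((α × β) × γ) F) : Matrix γ γ F :=
  Matrix.of fun c d => ∑ p : α × β, M (p, c) (p, d)

/-- Partial trace over the first tensor factor: `tr1 (A ⊗ B ⊗ C) = tr A • (B ⊗ C)`. -/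
def tr1 {F : Type*} [AddCommMonoid F] {α β γ : Type*} [Fintype α]
    (M : Matrix ((α × β) × γ) ((α × β) × γ) F) : Matrix (β × γ) (β × γ) F :=
  Matrix.of fun p q => ∑ i : α, M ((i, p.1), p.2) ((i, q.1), q.2)

/-- Partial trace over the middle tensor factor: `tr2 (A ⊗ B ⊗ C) = tr B • (A ⊗ C)`. -/
def tr2 {F : Type*} [AddCommMonoid F] {α β γ : Type*} [Fintype β]
    (M : Matrix ((α × β) × γ) ((α × β) × γ) F) : Matrix (α × γ) (α × γ) F :=
  Matrix.of fun p q => ∑ k : β, M ((p.1, k), p.2) ((q.1, k), q.2)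

/-- Partial trace over the third tensor factor: `tr3 (A ⊗ B ⊗ C) = tr C • (A ⊗ B)`. -/
def tr3 {F : Type*} [AddCommMonoid F] {α β γ : Type*} [Fintype γ]
    (M : Matrix ((α × β) × γ) ((α × β) × γ) F) : Matrix (α × β) (α × β) F :=
  Matrix.of fun p q => ∑ c : γ, M (p, c) (q, c)

/-- Partial trace over the second factor of a twofold Kronecker product:
`ptr (B ⊗ C) = tr C • B`. -/
def ptr {F : Type*} [AddCommMonoid F] {α β : Type*} [Fintype β]
    (M : Matrix (α × β) (α × β) F) : Matrix α α F :=
  Matrix.of fun i j => ∑ k : β, M (i, k) (j, k)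

/-- Partial transpose in the third tensor factor: `pT3 (A ⊗ B ⊗ C) = A ⊗ B ⊗ Cᵀ`. -/
def pT3 {F : Type*} {α β γ : Type*}
    (M : Matrix ((α × β) × γ) ((α × β) × γ) F) : Matrix ((α × β) × γ) ((α × β) × γ) F :=
  Matrix.of fun p q => M (p.1, q.2) (q.1, p.2)

/-- Partial transpose in the first two tensor factors:
`pT12 (A ⊗ B ⊗ C) = Aᵀ ⊗ Bᵀ ⊗ C`. -/
def pT12 {F : Type*} {α β γ : Type*}
    (M : Matrix ((α × β) × γ) ((α × β) × γ) F) : Matrix ((α × β) × γ) ((α × β) × γ) F :=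
  Matrix.of fun p q => M (q.1, p.2) (p.1, q.2)

theorem stmt6 {F : Type*} [Field F] {m n : ℕ}
    (γ₁ : Matrix (Fin n) (Fin n) F) (hγ₁ : trace γ₁ = 1)
    (γ₀ : Matrix ((Fin m × Fin n) × Fin m) ((Fin m × Fin n) × Fin m) F)
    (hγ₀ : tr2 γ₀ = 0) :
    ∀ (A : Matrix (Fin m) (Fin m) F) (B : Matrix (Fin n) (Fin n) F),
      tr12 (((∑ i : Fin m, ∑ j : Fin m,
          single i j (1 : F) ⊗ₖ γ₁ ⊗ₖ single j i (1 : F)) + γ₀)ᵀ *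
        (ksum A B ⊗ₖ (1 : Matrix (Fin m) (Fin m) F) -
          ((1 : Matrix (Fin m) (Fin m) F) ⊗ₖ B) ⊗ₖ (1 : Matrix (Fin m) (Fin m) F))) = A := by
  intro A B
  have hM : ksum A B ⊗ₖ (1 : Matrix (Fin m) (Fin m) F) -
      ((1 : Matrix (Fin m) (Fin m) F) ⊗ₖ B) ⊗ₖ (1 : Matrix (Fin m) (Fin m) F)
      = (A ⊗ₖ (1 : Matrix (Fin n) (Fin n) F)) ⊗ₖ (1 : Matrix (Fin m) (Fin m) F) := by
    unfold ksum
    rw [Matrix.add_kronecker, add_sub_cancel_right]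
  rw [hM]
  ext c d
  simp only [tr12, Matrix.of_apply, Matrix.mul_apply, Matrix.transpose_apply,
    Matrix.add_apply, Matrix.sum_apply, Matrix.kroneckerMap_apply, Matrix.one_apply,
    Fintype.sum_prod_type]
  simp only [add_mul, Finset.sum_add_distrib]
  have h0 : ∀ (x2 x : Fin m), ∑ x1 : Fin n, γ₀ ((x2,x1),d) ((x,x1),c) = 0 := by
    intro x2 x
    have := congrFun (congrFun hγ₀ (x2,d)) (x,c)
    simpa [tr2] using this
  simp only [Matrix.single, Matrix.of_apply, mul_ite, ite_mul, mul_one, one_mul,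
    mul_zero, zero_mul, Finset.sum_ite_eq, Finset.sum_ite_eq', Finset.mem_univ, if_true,
    ite_and, Finset.sum_ite_irrel, Finset.sum_const_zero]
  have h2 : ∀ x : Fin m, ∑ x_1 : Fin n, ∑ x_2 : Fin m, γ₀ ((x_2, x_1), d) ((x, x_1), c) * A x_2 x = 0 := by
    intro x
    rw [Finset.sum_comm]
    refine Finset.sum_eq_zero fun x2 _ => ?_
    rw [← Finset.sum_mul, h0, zero_mul]
  have h1 : (∑ x : Fin n, γ₁ x x) = 1 := by simpa [Matrix.trace, Matrix.diag] using hγ₁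
  simp only [h2, Finset.sum_const_zero, add_zero, ← Finset.sum_mul, h1, one_mul]
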